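/- For a list S of n reals of which at most p have been arbitrarily corrupted from an honest list T (all honest values in [a,b]), the robust ADMM x-update x_i^{k+1} = (1/(1+2ρn))(ρ n x_i^k + ρ Γ_p(S) − α + c) differs from the honest update using Γ_p(T) by at most ρ·n·(b−a)/(1+2ρn) in absolute value. -/

import Mathlib

/-- Trimmed-sum operator `Γ_p`: sort, replace the `p` smallest and `p` largest entries by
the mean of the remaining `n - 2p` entries, and return the sum of the resulting list. -/
noncomputable def trimmedSum (p : ℕ) (l : List ℝ) : ℝ :=
  let s := l.mergeSort (· ≤ ·)
  let mid := (s.drop p).take (l.length - 2 * p)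
  mid.sum + 2 * p * (mid.sum / (l.length - 2 * p))


lemma trimmed_bounds (p : ℕ) (a b : ℝ) (l : List ℝ) (hn : 2 * p < l.length)
    (hlt : l.countP (fun x => decide (x < a)) ≤ p)
    (hgt : l.countP (fun x => decide (b < x)) ≤ p) :
    (l.length : ℝ) * a ≤ trimmedSum p l ∧ trimmedSum p l ≤ (l.length : ℝ) * b := by
  set s := l.mergeSort (fun x1 x2 => decide (x1 ≤ x2)) with hsdef
  have hperm : s.Perm l := l.mergeSort_perm _
  have hslen : s.length = l.length := hperm.length_eq
  have hsorted : List.Pairwise (· ≤ ·) s := by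
    have h := List.pairwise_mergeSort (le := fun x y : ℝ => decide (x ≤ y))
      (by intro a b c; simp; exact le_trans) (by intro a b; simp; exact le_total a b) l
    simpa using h
  have hmono : ∀ (i j : ℕ) (hi : i < s.length) (hj : j < s.length), i ≤ j → s[i] ≤ s[j] := by
    intro i j hi hj hij
    rcases eq_or_lt_of_le hij with rfl | h
    · exact le_refl _
    · simpa using List.pairwise_iff_get.1 hsorted ⟨i, hi⟩ ⟨j, hj⟩ h
  set m := l.length - 2 * p with hm
  set mid := (s.drop p).take m with hmid
  have hmidlen : mid.length = m := by
    simp [hmid, hslen]; omega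
  -- every element of mid is in [a, b]
  have hbound : ∀ x ∈ mid, a ≤ x ∧ x ≤ b := by
    intro x hx
    obtain ⟨i, hi, rfl⟩ := List.getElem_of_mem hx
    have hi' : i < m := hmidlen ▸ hi
    have hplt : p + i < s.length := by omega
    have hx' : mid[i] = s[p + i] := by
      simp only [hmid, List.getElem_take, List.getElem_drop]
    rw [hx']
    constructor
    · by_contra h
      push_neg at h
      have hall : ∀ y ∈ s.take (p + i + 1), (fun x => decide (x < a)) y = true := by
        intro y hy
        obtain ⟨k, hk, rfl⟩ := List.getElem_of_mem hy
        have hk' : k < p + i + 1 := by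
          have := hk; simp [List.length_take] at this; omega
        rw [List.getElem_take]
        simp only [decide_eq_true_eq]
        exact lt_of_le_of_lt (hmono k (p + i) (by omega) hplt (by omega)) h
      have h1 : (s.take (p + i + 1)).countP (fun x => decide (x < a)) = p + i + 1 := by
        rw [List.countP_eq_length.2 hall, List.length_take]; omega
      have h2 : (s.take (p + i + 1)).countP (fun x => decide (x < a))
          ≤ s.countP (fun x => decide (x < a)) := by
        conv_rhs => rw [← List.take_append_drop (p + i + 1) s]
        rw [List.countP_append]; omega
      have h3 := hperm.countP_eq (fun x => decide (x < a))
      omega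
    · by_contra h
      push_neg at h
      have hall : ∀ y ∈ s.drop (p + i), (fun x => decide (b < x)) y = true := by
        intro y hy
        obtain ⟨k, hk, rfl⟩ := List.getElem_of_mem hy
        rw [List.getElem_drop]
        simp only [decide_eq_true_eq]
        exact lt_of_lt_of_le h (hmono (p + i) (p + i + k) hplt (by
          have := hk; simp [List.length_drop] at this; omega) (by omega))
      have h1 : (s.drop (p + i)).countP (fun x => decide (b < x)) = s.length - (p + i) := by
        rw [List.countP_eq_length.2 hall, List.length_drop]
      have h2 : (s.drop (p + i)).countP (fun x => decide (b < x))
          ≤ s.countP (fun x => decide (b < x)) := by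
        conv_rhs => rw [← List.take_append_drop (p + i) s]
        rw [List.countP_append]; omega
      have h3 := hperm.countP_eq (fun x => decide (b < x))
      omega
  have hsum_lo : (m : ℝ) * a ≤ mid.sum := by
    have := List.card_nsmul_le_sum mid a (fun x hx => (hbound x hx).1)
    rwa [hmidlen, nsmul_eq_mul] at this
  have hsum_hi : mid.sum ≤ (m : ℝ) * b := by
    have := List.sum_le_card_nsmul mid b (fun x hx => (hbound x hx).2)
    rwa [hmidlen, nsmul_eq_mul] at this
  have hmr : (0 : ℝ) < (m : ℝ) := by
    have : 0 < m := by omega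
    exact_mod_cast this
  have hcast : ((l.length : ℝ) - 2 * p) = (m : ℝ) := by
    have : m + 2 * p = l.length := by omega
    push_cast [← this]; ring
  have hΓ : trimmedSum p l = mid.sum + 2 * p * (mid.sum / (m : ℝ)) := by
    rw [trimmedSum, hcast]
  have hq_lo : a ≤ mid.sum / (m : ℝ) := (le_div_iff₀ hmr).2 (by linarith)
  have hq_hi : mid.sum / (m : ℝ) ≤ b := (div_le_iff₀ hmr).2 (by linarith)
  have hlen : (l.length : ℝ) = (m : ℝ) + 2 * p := by
    have : m + 2 * p = l.length := by omega
    push_cast [← this]; ring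
  constructor
  · rw [hΓ, hlen]; nlinarith [hq_lo, hsum_lo]
  · rw [hΓ, hlen]; nlinarith [hq_hi, hsum_hi]


lemma countP_eq_card_filter_fin (l : List ℝ) (q : ℝ → Bool) :
    l.countP q = (Finset.univ.filter (fun i : Fin l.length => q (l.get i) = true)).card := by
  conv_lhs => rw [← List.map_get_finRange l]
  rw [List.countP_map, Fin.univ_def, Finset.filter, Finset.card]
  simp only [List.countP_eq_length_filter, Multiset.filter_coe, Multiset.coe_card]
  congr 1
  apply List.filter_congr
  intro x _; simp [Function.comp]

open Finset

/-- the robust ADMM x-update using `Γ_p` on a list `S` with at most `p`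
corrupted entries (honest list `T` with values in `[a,b]`) differs from the honest
update using `Γ_p(T)` by at most `ρ n (b-a)/(1+2ρn)`. -/
theorem robust_update_deviation_bound (p : ℕ) (a b : ℝ) (S T : List ℝ)
    (hlen : S.length = T.length) (hn : 2 * p < S.length)
    (hdiff : (Finset.univ.filter
        (fun i : Fin S.length => S.get i ≠ T.get (Fin.cast hlen i))).card ≤ p)
    (honest : ∀ x ∈ T, a ≤ x ∧ x ≤ b)
    (ρ xik α c : ℝ) (hρ : 0 < ρ) :
    |(1 / (1 + 2 * ρ * S.length))
        * (ρ * S.length * xik + ρ * trimmedSum p S - α + c)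
      - (1 / (1 + 2 * ρ * S.length))
          * (ρ * S.length * xik + ρ * trimmedSum p T - α + c)|
      ≤ ρ * S.length * (b - a) / (1 + 2 * ρ * S.length) := by
  have hTn : 2 * p < T.length := hlen ▸ hn
  -- countP bounds on S
  have hScount : ∀ q : ℝ → Bool, (∀ x, a ≤ x → x ≤ b → q x = false) →
      S.countP q ≤ p := by
    intro q hq
    rw [countP_eq_card_filter_fin]
    refine le_trans (Finset.card_le_card ?_) hdiff
    intro i hi
    simp only [Finset.mem_filter, Finset.mem_univ, true_and] at hi ⊢
    intro heq
    have hmem : T.get (Fin.cast hlen i) ∈ T := T.get_mem _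
    obtain ⟨h1, h2⟩ := honest _ hmem
    rw [heq] at hi
    rw [hq _ h1 h2] at hi
    simp at hi
  have hS1 : S.countP (fun x => decide (x < a)) ≤ p := by
    apply hScount; intro x h1 h2; simp; linarith
  have hS2 : S.countP (fun x => decide (b < x)) ≤ p := by
    apply hScount; intro x h1 h2; simp; linarith
  have hT1 : T.countP (fun x => decide (x < a)) ≤ p := by
    have : T.countP (fun x => decide (x < a)) = 0 := by
      rw [List.countP_eq_zero]
      intro x hx; simp; exact (honest x hx).1
    omega
  have hT2 : T.countP (fun x => decide (b < x)) ≤ p := by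
    have : T.countP (fun x => decide (b < x)) = 0 := by
      rw [List.countP_eq_zero]
      intro x hx; simp; exact (honest x hx).2
    omega
  obtain ⟨hSlo, hShi⟩ := trimmed_bounds p a b S hn hS1 hS2
  obtain ⟨hTlo, hThi⟩ := trimmed_bounds p a b T hTn hT1 hT2
  have hcastT : (T.length : ℝ) = (S.length : ℝ) := by rw [hlen]
  rw [hcastT] at hTlo hThi
  have hnR : (0 : ℝ) < (S.length : ℝ) := by
    have : 0 < S.length := by omega
    exact_mod_cast this
  have hd : (0 : ℝ) < 1 + 2 * ρ * S.length := by positivity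
  have hΔ : |trimmedSum p S - trimmedSum p T| ≤ (S.length : ℝ) * (b - a) := by
    rw [abs_le]; constructor <;> nlinarith
  have heq : (1 / (1 + 2 * ρ * S.length))
        * (ρ * S.length * xik + ρ * trimmedSum p S - α + c)
      - (1 / (1 + 2 * ρ * S.length))
          * (ρ * S.length * xik + ρ * trimmedSum p T - α + c)
      = ρ * (trimmedSum p S - trimmedSum p T) / (1 + 2 * ρ * S.length) := by
    field_simp; ring
  rw [heq, abs_div, abs_of_pos hd]
  rw [div_le_div_iff_of_pos_right hd, abs_mul, abs_of_pos hρ, mul_assoc]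
  exact mul_le_mul_of_nonneg_left hΔ (le_of_lt hρ)
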